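/- Let Q be a generator matrix on Fin N satisfying the mixing estimate with constants C ≥ 1 and γ > 0. Then for every ξ ∈ Z: (i) the function t ↦ exp(t • Qᵀ) *ᵥ ξ is integrable on [0,∞); (ii) the resolvent R ξ := −∫₀^∞ exp(t • Qᵀ) *ᵥ ξ dt satisfies ‖R ξ‖₁ ≤ (C/γ) * ‖ξ‖₁; and (iii) R (Qᵀ *ᵥ ξ) = ξ, i.e. the resolvent is a left inverse of Qᵀ on Z. -/

import Mathlib

open Matrix

/-- The probability simplex on `Fin N`. -/
def probSimplex (N : ℕ) : Set (Fin N → ℝ) :=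
  {μ | (∀ i, 0 ≤ μ i) ∧ ∑ i, μ i = 1}

/-- The ℓ¹ norm on `Fin N → ℝ`. -/
def l1norm {N : ℕ} (x : Fin N → ℝ) : ℝ := ∑ i, |x i|

/-- A generator (transition-rate) matrix: nonnegative off-diagonal entries and zero row sums. -/
def IsGenerator {N : ℕ} (Q : Matrix (Fin N) (Fin N) ℝ) : Prop :=
  (∀ i j, i ≠ j → 0 ≤ Q i j) ∧ (∀ i, ∑ j, Q i j = 0)

/-- The uniform exponential mixing estimate on the zero-sum subspace. -/
def MixingEstimate {N : ℕ} (Q : Matrix (Fin N) (Fin N) ℝ) (C γ : ℝ) : Prop :=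
  ∀ ξ : Fin N → ℝ, (∑ i, ξ i) = 0 → ∀ t : ℝ, 0 ≤ t →
    l1norm (NormedSpace.exp (t • Qᵀ) *ᵥ ξ) ≤ C * Real.exp (-γ * t) * l1norm ξ

open MeasureTheory Set Filter

attribute [local instance] Matrix.linftyOpNormedRing Matrix.linftyOpNormedAlgebra

namespace ResolventAux

variable {N : ℕ}

lemma l1norm_nonneg (x : Fin N → ℝ) : 0 ≤ l1norm x :=
  Finset.sum_nonneg fun _ _ => abs_nonneg _

lemma norm_le_l1norm (x : Fin N → ℝ) : ‖x‖ ≤ l1norm x := by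
  rw [pi_norm_le_iff_of_nonneg (l1norm_nonneg x)]
  intro i
  rw [Real.norm_eq_abs]
  exact Finset.single_le_sum (fun j _ => abs_nonneg (x j)) (Finset.mem_univ i)

/-- mulVec by a fixed vector, as a continuous linear map in the matrix. -/
noncomputable def mulVecCLM (N : ℕ) (ξ : Fin N → ℝ) :
    Matrix (Fin N) (Fin N) ℝ →L[ℝ] (Fin N → ℝ) :=
  LinearMap.toContinuousLinearMap
    { toFun := fun M => M *ᵥ ξ
      map_add' := fun A B => Matrix.add_mulVec A B ξ
      map_smul' := fun c A => Matrix.smul_mulVec c A ξ }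

@[simp] lemma mulVecCLM_apply (ξ : Fin N → ℝ) (M : Matrix (Fin N) (Fin N) ℝ) :
    mulVecCLM N ξ M = M *ᵥ ξ := rfl

lemma hasDerivAt_flow (Q : Matrix (Fin N) (Fin N) ℝ) (ξ : Fin N → ℝ) (t : ℝ) :
    HasDerivAt (fun t : ℝ => NormedSpace.exp (t • Qᵀ) *ᵥ ξ)
      (NormedSpace.exp (t • Qᵀ) *ᵥ (Qᵀ *ᵥ ξ)) t := by
  have h := hasDerivAt_exp_smul_const (𝕂 := ℝ) Qᵀ t
  have h2 := ((mulVecCLM N ξ).hasFDerivAt.comp_hasDerivAt t h)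
  rw [Matrix.mulVec_mulVec]
  exact h2

end ResolventAux


namespace ResolventAux

lemma tendsto_flow_zero {N : ℕ} (Q : Matrix (Fin N) (Fin N) ℝ) (C γ : ℝ) (hγ : 0 < γ)
    (hmix : MixingEstimate Q C γ) (ξ : Fin N → ℝ) (hξ : (∑ i, ξ i) = 0) :
    Tendsto (fun t : ℝ => NormedSpace.exp (t • Qᵀ) *ᵥ ξ) atTop (nhds 0) := by
  refine squeeze_zero_norm' (a := fun t => C * Real.exp (-γ * t) * l1norm ξ) ?_ ?_
  · filter_upwards [eventually_ge_atTop (0:ℝ)] with t ht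
    exact (norm_le_l1norm _).trans (hmix ξ hξ t ht)
  · have h1 : Tendsto (fun t : ℝ => -γ * t) atTop atBot :=
      tendsto_id.const_mul_atTop_of_neg (neg_lt_zero.2 hγ)
    have h2 : Tendsto (fun t : ℝ => Real.exp (-γ * t)) atTop (nhds 0) :=
      Real.tendsto_exp_atBot.comp h1
    have := (h2.const_mul C).mul_const (l1norm ξ)
    simpa using this

lemma integrableOn_exp_bound {c γ : ℝ} (hγ : 0 < γ) :
    MeasureTheory.IntegrableOn (fun t : ℝ => c * Real.exp (-γ * t)) (Set.Ioi 0) :=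
  (exp_neg_integrableOn_Ioi 0 hγ).const_mul c

lemma integrableOn_flow {N : ℕ} (Q : Matrix (Fin N) (Fin N) ℝ) (C γ : ℝ) (hγ : 0 < γ)
    (hmix : MixingEstimate Q C γ) (ξ : Fin N → ℝ) (hξ : (∑ i, ξ i) = 0) :
    MeasureTheory.IntegrableOn (fun t : ℝ => NormedSpace.exp (t • Qᵀ) *ᵥ ξ) (Set.Ici 0) := by
  rw [integrableOn_Ici_iff_integrableOn_Ioi]
  apply MeasureTheory.Integrable.mono' (g := fun t => (C * l1norm ξ) * Real.exp (-γ * t))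
    (integrableOn_exp_bound hγ)
  · exact ((continuous_iff_continuousAt.2 fun t =>
      (hasDerivAt_flow Q ξ t).continuousAt).aestronglyMeasurable).restrict
  · rw [MeasureTheory.ae_restrict_iff' measurableSet_Ioi]
    filter_upwards with t ht
    calc ‖NormedSpace.exp (t • Qᵀ) *ᵥ ξ‖ ≤ l1norm (NormedSpace.exp (t • Qᵀ) *ᵥ ξ) :=
          norm_le_l1norm _
      _ ≤ C * Real.exp (-γ * t) * l1norm ξ := hmix ξ hξ t ht.le
      _ = C * l1norm ξ * Real.exp (-γ * t) := by ring

lemma integral_exp_neg_mul {γ : ℝ} (hγ : 0 < γ) :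
    ∫ t in Set.Ioi (0:ℝ), Real.exp (-γ * t) = γ⁻¹ := by
  have hd : ∀ x ∈ Set.Ioi (0:ℝ), HasDerivAt (fun t => -γ⁻¹ * Real.exp (-γ * t))
      (Real.exp (-γ * x)) x := by
    intro x _
    have h1 : HasDerivAt (fun t : ℝ => -γ * t) (-γ) x := by
      simpa using (hasDerivAt_id x).const_mul (-γ)
    have h2 := (Real.hasDerivAt_exp (-γ * x)).comp x h1
    have h3 := h2.const_mul (-γ⁻¹)
    convert h3 using 1
    · rfl
    · rfl
    · rfl
    · rw [mul_comm (Real.exp (-γ * x)) (-γ), ← mul_assoc, neg_mul_neg, inv_mul_cancel₀ hγ.ne', one_mul]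
  have hcont : ContinuousWithinAt (fun t => -γ⁻¹ * Real.exp (-γ * t)) (Set.Ici 0) 0 :=
    (Continuous.continuousWithinAt (by continuity))
  have htend : Tendsto (fun t => -γ⁻¹ * Real.exp (-γ * t)) atTop (nhds 0) := by
    have h1 : Tendsto (fun t : ℝ => -γ * t) atTop atBot :=
      tendsto_id.const_mul_atTop_of_neg (neg_lt_zero.2 hγ)
    have h2 := Real.tendsto_exp_atBot.comp h1
    simpa using h2.const_mul (-γ⁻¹)
  have := MeasureTheory.integral_Ioi_of_hasDerivAt_of_tendsto hcont hd
    (exp_neg_integrableOn_Ioi 0 hγ) htend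
  rw [this]
  simp

end ResolventAux

theorem resolvent_estimates {N : ℕ} (hN : 1 ≤ N)
    (Q : Matrix (Fin N) (Fin N) ℝ) (hQ : IsGenerator Q)
    (C γ : ℝ) (hC : 1 ≤ C) (hγ : 0 < γ) (hmix : MixingEstimate Q C γ)
    (ξ : Fin N → ℝ) (hξ : (∑ i, ξ i) = 0) :
    MeasureTheory.IntegrableOn (fun t : ℝ => NormedSpace.exp (t • Qᵀ) *ᵥ ξ) (Set.Ici 0) ∧
    l1norm (-∫ t in Set.Ici (0 : ℝ), NormedSpace.exp (t • Qᵀ) *ᵥ ξ) ≤ C / γ * l1norm ξ ∧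
    (-∫ t in Set.Ici (0 : ℝ), NormedSpace.exp (t • Qᵀ) *ᵥ (Qᵀ *ᵥ ξ)) = ξ := by
  classical
  have hInt : IntegrableOn (fun t : ℝ => NormedSpace.exp (t • Qᵀ) *ᵥ ξ) (Ici 0) :=
    ResolventAux.integrableOn_flow Q C γ hγ hmix ξ hξ
  refine ⟨hInt, ?_, ?_⟩
  · -- part (ii)
    set I : Fin N → ℝ := ∫ t in Ici (0:ℝ), NormedSpace.exp (t • Qᵀ) *ᵥ ξ with hI
    have compInt : ∀ i : Fin N,
        Integrable (fun t : ℝ => (NormedSpace.exp (t • Qᵀ) *ᵥ ξ) i)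
          (volume.restrict (Ici 0)) := fun i =>
      (ContinuousLinearMap.proj (R := ℝ) (φ := fun _ : Fin N => ℝ) i).integrable_comp hInt
    have hIi : ∀ i : Fin N, I i = ∫ t in Ici (0:ℝ), (NormedSpace.exp (t • Qᵀ) *ᵥ ξ) i := by
      intro i
      have := (ContinuousLinearMap.proj (R := ℝ) (φ := fun _ : Fin N => ℝ) i).integral_comp_comm
        hInt
      simpa [hI] using this.symm
    have step2 : ∀ i : Fin N, |I i| ≤ ∫ t in Ici (0:ℝ), |(NormedSpace.exp (t • Qᵀ) *ᵥ ξ) i| := by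
      intro i
      rw [hIi i]
      simpa [Real.norm_eq_abs] using
        norm_integral_le_integral_norm (μ := volume.restrict (Ici 0))
          (fun t : ℝ => (NormedSpace.exp (t • Qᵀ) *ᵥ ξ) i)
    have hl1Int : Integrable (fun t : ℝ => l1norm (NormedSpace.exp (t • Qᵀ) *ᵥ ξ))
        (volume.restrict (Ici 0)) := by
      simp only [l1norm]
      exact integrable_finset_sum _ fun i _ => (compInt i).abs
    have step3 : ∑ i : Fin N, ∫ t in Ici (0:ℝ), |(NormedSpace.exp (t • Qᵀ) *ᵥ ξ) i|
        = ∫ t in Ici (0:ℝ), l1norm (NormedSpace.exp (t • Qᵀ) *ᵥ ξ) := by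
      simp only [l1norm]
      exact (integral_finset_sum Finset.univ fun i _ => (compInt i).abs).symm
    have hgInt : IntegrableOn (fun t : ℝ => C * Real.exp (-γ * t) * l1norm ξ) (Ici 0) := by
      rw [integrableOn_Ici_iff_integrableOn_Ioi]
      exact ((exp_neg_integrableOn_Ioi 0 hγ).const_mul (C * l1norm ξ)).congr
        (ae_of_all _ fun t => by ring)
    have step4 : ∫ t in Ici (0:ℝ), l1norm (NormedSpace.exp (t • Qᵀ) *ᵥ ξ)
        ≤ ∫ t in Ici (0:ℝ), C * Real.exp (-γ * t) * l1norm ξ :=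
      setIntegral_mono_on hl1Int hgInt measurableSet_Ici fun t ht => hmix ξ hξ t ht
    have step5 : ∫ t in Ici (0:ℝ), C * Real.exp (-γ * t) * l1norm ξ = C / γ * l1norm ξ := by
      rw [integral_Ici_eq_integral_Ioi]
      have : ∀ t : ℝ, C * Real.exp (-γ * t) * l1norm ξ
          = (C * l1norm ξ) * Real.exp (-γ * t) := fun t => by ring
      simp_rw [this]
      rw [integral_const_mul, ResolventAux.integral_exp_neg_mul hγ]
      field_simp
    have hchain : l1norm (-I) ≤ ∫ t in Ici (0:ℝ), l1norm (NormedSpace.exp (t • Qᵀ) *ᵥ ξ) := by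
      have : l1norm (-I) = ∑ i : Fin N, |I i| := by
        simp [l1norm, abs_neg]
      rw [this, ← step3]
      exact Finset.sum_le_sum fun i _ => step2 i
    calc l1norm (-I) ≤ _ := hchain
      _ ≤ _ := step4
      _ = C / γ * l1norm ξ := step5
  · -- part (iii)
    have hξ' : ∑ i, (Qᵀ *ᵥ ξ) i = 0 := by
      simp only [Matrix.mulVec, dotProduct, Matrix.transpose_apply]
      rw [Finset.sum_comm]
      have : ∀ j : Fin N, ∑ i : Fin N, Q j i * ξ j = 0 := by
        intro j
        rw [← Finset.sum_mul, hQ.2 j, zero_mul]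
      simp [this]
    have key : ∫ t in Ioi (0:ℝ), NormedSpace.exp (t • Qᵀ) *ᵥ (Qᵀ *ᵥ ξ)
        = 0 - NormedSpace.exp ((0:ℝ) • Qᵀ) *ᵥ ξ :=
      integral_Ioi_of_hasDerivAt_of_tendsto
        (ResolventAux.hasDerivAt_flow Q ξ 0).continuousAt.continuousWithinAt
        (fun x _ => ResolventAux.hasDerivAt_flow Q ξ x)
        ((ResolventAux.integrableOn_flow Q C γ hγ hmix _ hξ').mono_set Ioi_subset_Ici_self)
        (ResolventAux.tendsto_flow_zero Q C γ hγ hmix ξ hξ)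
    rw [integral_Ici_eq_integral_Ioi, key]
    simp [Matrix.one_mulVec]
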